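/- Let K ⊂ ℝ³ be a centrally symmetric convex body which is strongly convex with smooth boundary (K ∈ 𝒦̂). Then Θ(Y(π)K) = π − Θ(K), Φ(Y(π)K) = π − Φ(K), Ψ(Y(π)K) = Ψ(K), and F(Y(π)K) = −F(K), G(Y(π)K) = −G(K), H(Y(π)K) = H(K). -/

import Mathlib

open MeasureTheory Real Set
open scoped RealInnerProductSpace

noncomputable section

/-- Euclidean 3-space. -/
abbrev E3 := EuclideanSpace ℝ (Fin 3)

/-- The point `(a, b, c)` of `ℝ³`. -/
def pt (a b c : ℝ) : E3 := (WithLp.equiv 2 (Fin 3 → ℝ)).symm ![a, b, c]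

/-- The polar body `K° = {y : ⟪x, y⟫ ≤ 1 for all x ∈ K}`. -/
def polarBody (K : Set E3) : Set E3 := {y : E3 | ∀ x ∈ K, ⟪x, y⟫ ≤ 1}

/-- The radial function `ρ_K(x) = max {t ≥ 0 : t • x ∈ K}`. -/
def radial (K : Set E3) (x : E3) : ℝ := sSup {t : ℝ | 0 ≤ t ∧ t • x ∈ K}

/-- The spherical parametrization `P(α, β)`. -/
def sphP (α β : ℝ) : E3 := pt (cos α) (sin α * cos β) (sin α * sin β)

/-- Rotation by angle `θ` about the `x`-axis. -/
def rotX (θ : ℝ) (p : E3) : E3 :=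
  pt (p 0) (cos θ * p 1 - sin θ * p 2) (sin θ * p 1 + cos θ * p 2)

/-- Rotation by angle `φ` about the `y`-axis. -/
def rotY (φ : ℝ) (p : E3) : E3 :=
  pt (cos φ * p 0 + sin φ * p 2) (p 1) (-sin φ * p 0 + cos φ * p 2)

/-- Rotation by angle `ψ` about the `z`-axis. -/
def rotZ (ψ : ℝ) (p : E3) : E3 :=
  pt (cos ψ * p 0 - sin ψ * p 1) (sin ψ * p 0 + cos ψ * p 1) (p 2)

/-- `K ∈ 𝒦̂`: a centrally symmetric convex body in `ℝ³` which is strongly convex with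
smooth boundary, i.e. `h_K = gauge²/2` is `C^∞` away from the origin and has positive
definite Hessian at every point of the unit sphere. -/
def IsKhat (K : Set E3) : Prop :=
  IsCompact K ∧ Convex ℝ K ∧ (interior K).Nonempty ∧ K = -K ∧
    ContDiffOn ℝ (⊤ : ℕ∞) (fun x => gauge K x ^ 2 / 2) {0}ᶜ ∧
    ∀ x : E3, ‖x‖ = 1 → ∀ v : E3, v ≠ 0 →
      0 < fderiv ℝ (fderiv ℝ (fun y => gauge K y ^ 2 / 2)) x v v

/-- `Θ` satisfies the defining property of `Θ(K)`. -/
def ThetaEq (K : Set E3) (Θ : ℝ) : Prop :=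
  Θ ∈ Ioo 0 π ∧
    ∫ β in (0:ℝ)..Θ, ∫ α in (0:ℝ)..π, radial K (sphP α β) ^ 3 * sin α
      = ∫ β in Θ..π, ∫ α in (0:ℝ)..π, radial K (sphP α β) ^ 3 * sin α

/-- `Φ` satisfies the defining property of `Φ(K)`. -/
def PhiEq (K : Set E3) (Φ : ℝ) : Prop :=
  Φ ∈ Ioo 0 π ∧
    ∫ α in (0:ℝ)..Φ, radial K (sphP α 0) ^ 2 = ∫ α in Φ..π, radial K (sphP α 0) ^ 2

/-- `Ψ` satisfies the defining property of `Ψ(K)`, where `Θ = Θ(K)`. -/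
def PsiEq (K : Set E3) (Θ Ψ : ℝ) : Prop :=
  Ψ ∈ Ioo 0 π ∧
    ∫ α in (0:ℝ)..Ψ, radial K (sphP α Θ) ^ 2 = ∫ α in Ψ..π, radial K (sphP α Θ) ^ 2

/-- The unitriangular map whose inverse is the matrix `𝒜(K)` (for `Θ = Θ(K)`, `Φ = Φ(K)`,
`Ψ = Ψ(K)`); thus the body `𝒜(K) K` is the preimage `shear Θ Φ Ψ ⁻¹' K`. -/
def shear (Θ Φ Ψ : ℝ) (p : E3) : E3 :=
  pt (p 0 + p 1 / tan Φ + p 2 / (sin Θ * tan Ψ)) (p 1 + p 2 / tan Θ) (p 2)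

/-- `v₁ = vol(L ∩ {x ≥ 0, y ≥ 0, z ≥ 0})`. -/
def vol₁ (L : Set E3) : ℝ := (volume (L ∩ {p : E3 | 0 ≤ p 0 ∧ 0 ≤ p 1 ∧ 0 ≤ p 2})).toReal

/-- `v₂ = vol(L ∩ {x ≤ 0, y ≥ 0, z ≥ 0})`. -/
def vol₂ (L : Set E3) : ℝ := (volume (L ∩ {p : E3 | p 0 ≤ 0 ∧ 0 ≤ p 1 ∧ 0 ≤ p 2})).toReal

/-- `v₃ = vol(L ∩ {x ≤ 0, y ≤ 0, z ≥ 0})`. -/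
def vol₃ (L : Set E3) : ℝ := (volume (L ∩ {p : E3 | p 0 ≤ 0 ∧ p 1 ≤ 0 ∧ 0 ≤ p 2})).toReal

/-- `v₄ = vol(L ∩ {x ≥ 0, y ≤ 0, z ≥ 0})`. -/
def vol₄ (L : Set E3) : ℝ := (volume (L ∩ {p : E3 | 0 ≤ p 0 ∧ p 1 ≤ 0 ∧ 0 ≤ p 2})).toReal

/-- `F` applied to the transformed body `L' = 𝒜(K) K`. -/
def Ffun (L : Set E3) : ℝ :=
  (μH[2] (L ∩ {p : E3 | p 0 = 0 ∧ 0 ≤ p 1 ∧ 0 ≤ p 2})).toReal -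
    (μH[2] (L ∩ {p : E3 | p 0 = 0 ∧ p 1 ≤ 0 ∧ 0 ≤ p 2})).toReal

/-- `G = v₁ + v₃ - v₂ - v₄` applied to the transformed body `L' = 𝒜(K) K`. -/
def Gfun (L : Set E3) : ℝ := vol₁ L + vol₃ L - vol₂ L - vol₄ L

/-- `H = v₁ + v₄ - v₂ - v₃` applied to the transformed body `L' = 𝒜(K) K`. -/
def Hfun (L : Set E3) : ℝ := vol₁ L + vol₄ L - vol₂ L - vol₃ L

/-- Condition (★). -/
def StarCond (K : Set E3) : Prop :=
  volume (K ∩ {p : E3 | 0 ≤ p 0 ∧ 0 ≤ p 1 ∧ 0 ≤ p 2})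
      = volume (K ∩ {p : E3 | p 0 ≤ 0 ∧ 0 ≤ p 1 ∧ 0 ≤ p 2}) ∧
    volume (K ∩ {p : E3 | p 0 ≤ 0 ∧ 0 ≤ p 1 ∧ 0 ≤ p 2})
      = volume (K ∩ {p : E3 | p 0 ≤ 0 ∧ p 1 ≤ 0 ∧ 0 ≤ p 2}) ∧
    volume (K ∩ {p : E3 | p 0 ≤ 0 ∧ p 1 ≤ 0 ∧ 0 ≤ p 2})
      = volume (K ∩ {p : E3 | 0 ≤ p 0 ∧ p 1 ≤ 0 ∧ 0 ≤ p 2}) ∧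
    μH[2] (K ∩ {p : E3 | p 0 = 0 ∧ 0 ≤ p 1 ∧ 0 ≤ p 2})
      = μH[2] (K ∩ {p : E3 | p 0 = 0 ∧ p 1 ≤ 0 ∧ 0 ≤ p 2}) ∧
    μH[2] (K ∩ {p : E3 | p 1 = 0 ∧ 0 ≤ p 0 ∧ 0 ≤ p 2})
      = μH[2] (K ∩ {p : E3 | p 1 = 0 ∧ 0 ≤ p 0 ∧ p 2 ≤ 0}) ∧
    μH[2] (K ∩ {p : E3 | p 2 = 0 ∧ 0 ≤ p 0 ∧ 0 ≤ p 1})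
      = μH[2] (K ∩ {p : E3 | p 2 = 0 ∧ p 0 ≤ 0 ∧ 0 ≤ p 1})

/-- The cube `[-1,1]³`. -/
def cube : Set E3 := {x : E3 | ∀ i, x i ∈ Icc (-1:ℝ) 1}

/-- The cross product on `ℝ³`. -/
def cross (a b : E3) : E3 :=
  pt (a 1 * b 2 - a 2 * b 1) (a 2 * b 0 - a 0 * b 2) (a 0 * b 1 - a 1 * b 0)

/-! ### Auxiliary lemmas -/

open Topology Metric

section Aux

@[simp] lemma pt_app0 (a b c : ℝ) : pt a b c 0 = a := rfl
@[simp] lemma pt_app1 (a b c : ℝ) : pt a b c 1 = b := rfl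
@[simp] lemma pt_app2 (a b c : ℝ) : pt a b c 2 = c := rfl
@[simp] lemma E3_neg_apply (p : E3) (i : Fin 3) : (-p) i = -(p i) := rfl
@[simp] lemma E3_add_apply (p q : E3) (i : Fin 3) : (p + q) i = p i + q i := rfl
@[simp] lemma E3_smul_apply (t : ℝ) (p : E3) (i : Fin 3) : (t • p) i = t * p i := rfl
@[simp] lemma E3_zero_apply (i : Fin 3) : (0 : E3) i = 0 := rfl

lemma E3ext {p q : E3} (h0 : p 0 = q 0) (h1 : p 1 = q 1) (h2 : p 2 = q 2) : p = q := by
  ext i; fin_cases i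
  · exact h0
  · exact h1
  · exact h2

lemma contCoord (i : Fin 3) : Continuous fun p : E3 => p i :=
  (continuous_apply i).comp (EuclideanSpace.equiv (Fin 3) ℝ).continuous

lemma contPt {X : Type*} [TopologicalSpace X] {f g h : X → ℝ} (hf : Continuous f)
    (hg : Continuous g) (hh : Continuous h) : Continuous fun x => pt (f x) (g x) (h x) := by
  have : Continuous fun x => (![f x, g x, h x] : Fin 3 → ℝ) := by
    apply continuous_pi; intro i; fin_cases i <;> simpa
  exact ((EuclideanSpace.equiv (Fin 3) ℝ).symm.continuous).comp this

/-! ### Coordinate maps -/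

/-- Reflection in the `y` coordinate. -/
def flipY (p : E3) : E3 := pt (p 0) (-(p 1)) (p 2)

lemma rotY_pi_apply (p : E3) : rotY π p = pt (-(p 0)) (p 1) (-(p 2)) := by
  apply E3ext <;> simp [rotY]

lemma rotY_pi_invol (p : E3) : rotY π (rotY π p) = p := by
  apply E3ext <;> simp [rotY_pi_apply]

lemma mem_rotY_image {K : Set E3} {x : E3} : x ∈ rotY π '' K ↔ rotY π x ∈ K :=
  ⟨by rintro ⟨p, hp, rfl⟩; rwa [rotY_pi_invol], fun h => ⟨rotY π x, h, rotY_pi_invol x⟩⟩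

lemma neg_rotY_pi (p : E3) : -(rotY π p) = flipY p := by
  apply E3ext <;> simp [rotY_pi_apply, flipY]

lemma flipY_smul (t : ℝ) (p : E3) : flipY (t • p) = t • flipY p := by
  apply E3ext <;> simp [flipY]

lemma flipY_invol : Function.Involutive flipY := fun p => by
  apply E3ext <;> simp [flipY]

lemma flipY_sphP (α β : ℝ) : flipY (sphP α β) = sphP α (π - β) := by
  apply E3ext <;> simp [flipY, sphP, Real.cos_pi_sub, Real.sin_pi_sub]

lemma sphP_pi_eq (α : ℝ) : sphP α π = -sphP (π - α) 0 := by
  apply E3ext <;> simp [sphP, Real.cos_pi_sub, Real.sin_pi_sub]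

lemma sphP_ne_zero (α β : ℝ) : sphP α β ≠ 0 := by
  intro h
  have h0 : Real.cos α = 0 := congrArg (fun p : E3 => p 0) h
  have h1 : Real.sin α * Real.cos β = 0 := congrArg (fun p : E3 => p 1) h
  have h2 : Real.sin α * Real.sin β = 0 := congrArg (fun p : E3 => p 2) h
  nlinarith [Real.sin_sq_add_cos_sq α, Real.sin_sq_add_cos_sq β, sq_nonneg (Real.sin α),
    sq_nonneg (Real.cos β), sq_nonneg (Real.sin β)]

lemma norm_sphP (α β : ℝ) : ‖sphP α β‖ = 1 := by
  rw [EuclideanSpace.norm_eq]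
  rw [show ∑ i, ‖sphP α β i‖ ^ 2 = 1 from ?_]
  · exact Real.sqrt_one
  · rw [Fin.sum_univ_three]
    simp only [sphP, pt_app0, pt_app1, pt_app2, Real.norm_eq_abs, sq_abs]
    nlinarith [Real.sin_sq_add_cos_sq α, Real.sin_sq_add_cos_sq β]

lemma cont_sphP : Continuous fun q : ℝ × ℝ => sphP q.2 q.1 := by
  apply contPt
  · exact Real.continuous_cos.comp continuous_snd
  · exact ((Real.continuous_sin.comp continuous_snd).mul (Real.continuous_cos.comp continuous_fst))
  · exact ((Real.continuous_sin.comp continuous_snd).mul (Real.continuous_sin.comp continuous_fst))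

/-! ### Shear lemmas -/

lemma shear_neg (Θ Φ Ψ : ℝ) (p : E3) : shear Θ Φ Ψ (-p) = -shear Θ Φ Ψ p := by
  apply E3ext <;> simp [shear] <;> ring

lemma rot_shear (Θ Φ Ψ : ℝ) (p : E3) :
    rotY π (shear (π - Θ) (π - Φ) Ψ p) = shear Θ Φ Ψ (rotY π p) := by
  apply E3ext <;>
    simp [rotY_pi_apply, shear, Real.tan_pi_sub, Real.sin_pi_sub] <;> ring

/-! ### The flip as a linear isometry -/

def flipLM : E3 →ₗ[ℝ] E3 where
  toFun := flipY
  map_add' := fun p q => by apply E3ext <;> simp [flipY] <;> ring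
  map_smul' := fun t p => by apply E3ext <;> simp [flipY] <;> ring

def FLE : E3 ≃ₗᵢ[ℝ] E3 where
  toLinearEquiv := LinearEquiv.ofInvolutive flipLM flipY_invol
  norm_map' := fun p => by
    show ‖flipY p‖ = ‖p‖
    rw [EuclideanSpace.norm_eq, EuclideanSpace.norm_eq]
    congr 1
    rw [Fin.sum_univ_three, Fin.sum_univ_three]
    simp [flipY]

lemma vol_preimage_flipY (S : Set E3) : volume (flipY ⁻¹' S) = volume S :=
  FLE.measurePreserving.measure_preimage_emb FLE.toHomeomorph.measurableEmbedding S

lemma mh2_preimage_flipY (S : Set E3) : μH[2] (flipY ⁻¹' S) = μH[2] S :=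
  FLE.toIsometryEquiv.hausdorffMeasure_preimage 2 S


/-- Auxiliary integrand for `Θ`. -/
def auxFθ (K : Set E3) : ℝ → ℝ := fun β => ∫ α in (0:ℝ)..π, radial K (sphP α β) ^ 3 * sin α

/-- Auxiliary integrand for `Φ`, `Ψ`. -/
def auxFφ (K : Set E3) (b : ℝ) : ℝ → ℝ := fun α => radial K (sphP α b) ^ 2

/-! ### Radial function lemmas -/

section Radial

variable {K : Set E3}

lemma neg_mem_symm (hsymm : K = -K) (y : E3) : -y ∈ K ↔ y ∈ K := by
  conv_lhs => rw [hsymm]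
  simp

lemma radial_image_rot (hsymm : K = -K) (x : E3) :
    radial (rotY π '' K) x = radial K (flipY x) := by
  unfold radial
  congr 1
  ext t
  simp only [mem_setOf_eq, and_congr_right_iff]
  intro ht
  rw [mem_rotY_image, ← neg_mem_symm hsymm (rotY π (t • x)), neg_rotY_pi, flipY_smul]

lemma radial_neg_arg (hsymm : K = -K) (x : E3) : radial K (-x) = radial K x := by
  unfold radial
  congr 1
  ext t
  simp only [mem_setOf_eq, and_congr_right_iff]
  intro ht
  rw [smul_neg, neg_mem_symm hsymm]

variable (hcomp : IsCompact K) (hconv : Convex ℝ K) (hnhds : K ∈ 𝓝 (0 : E3))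
include hcomp hconv hnhds

lemma memK_iff_gauge (y : E3) : y ∈ K ↔ gauge K y ≤ 1 := by
  rw [gauge_le_one_iff_mem_closure hconv hnhds, hcomp.isClosed.closure_eq]

omit hconv in
lemma gauge_pos_of_ne {x : E3} (hx : x ≠ 0) : 0 < gauge K x := by
  obtain ⟨R, hR0, hR⟩ := hcomp.isBounded.subset_closedBall_lt 0 0
  have hsub : K ⊆ ball (0 : E3) (R + 1) :=
    hR.trans (closedBall_subset_ball (by linarith))
  have h1 : gauge (ball (0 : E3) (R + 1)) x ≤ gauge K x :=
    gauge_mono (absorbent_nhds_zero hnhds) hsub x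
  rw [gauge_ball (by linarith)] at h1
  have : 0 < ‖x‖ / (R + 1) := div_pos (norm_pos_iff.2 hx) (by linarith)
  linarith

lemma radial_eq_inv_gauge {x : E3} (hx : x ≠ 0) : radial K x = (gauge K x)⁻¹ := by
  have hg := gauge_pos_of_ne hcomp hnhds hx
  have hset : {t : ℝ | 0 ≤ t ∧ t • x ∈ K} = Icc 0 (gauge K x)⁻¹ := by
    ext t
    simp only [mem_setOf_eq, mem_Icc]
    constructor
    · rintro ⟨ht, htK⟩
      refine ⟨ht, ?_⟩
      rw [memK_iff_gauge hcomp hconv hnhds, gauge_smul_of_nonneg ht, smul_eq_mul] at htK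
      rw [← one_div, le_div_iff₀ hg]; exact htK
    · rintro ⟨ht, htK⟩
      refine ⟨ht, ?_⟩
      rw [memK_iff_gauge hcomp hconv hnhds, gauge_smul_of_nonneg ht, smul_eq_mul]
      rw [← one_div, le_div_iff₀ hg] at htK; exact htK
  rw [radial, hset, csSup_Icc (by positivity)]

lemma radial_lb : ∃ r > (0:ℝ), ∀ x : E3, ‖x‖ = 1 → r ≤ radial K x := by
  obtain ⟨r, hr0, hball⟩ := Metric.mem_nhds_iff.1 hnhds
  refine ⟨r, hr0, fun x hx => ?_⟩
  have hxne : x ≠ 0 := by intro h; rw [h, norm_zero] at hx; norm_num at hx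
  have hg := gauge_pos_of_ne hcomp hnhds hxne
  have hle : gauge K x ≤ 1 / r := by
    have := gauge_mono (absorbent_ball_zero hr0) hball x
    rwa [gauge_ball hr0.le, hx] at this
  rw [radial_eq_inv_gauge hcomp hconv hnhds hxne]
  calc r = (1/r)⁻¹ := by rw [one_div, inv_inv]
  _ ≤ (gauge K x)⁻¹ := inv_anti₀ hg hle

lemma cont_radial_sphP : Continuous fun q : ℝ × ℝ => radial K (sphP q.2 q.1) := by
  have heq : (fun q : ℝ × ℝ => radial K (sphP q.2 q.1))
      = fun q : ℝ × ℝ => (gauge K (sphP q.2 q.1))⁻¹ :=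
    funext fun q => radial_eq_inv_gauge hcomp hconv hnhds (sphP_ne_zero _ _)
  rw [heq]
  exact ((continuous_gauge hconv hnhds).comp cont_sphP).inv₀
    fun q => (gauge_pos_of_ne hcomp hnhds (sphP_ne_zero _ _)).ne'

lemma cont_radial_sphP1 (b : ℝ) : Continuous fun α => radial K (sphP α b) := by
  have heq : (fun α => radial K (sphP α b)) = fun α => (gauge K (sphP α b))⁻¹ :=
    funext fun α => radial_eq_inv_gauge hcomp hconv hnhds (sphP_ne_zero _ _)
  rw [heq]
  refine Continuous.inv₀ ?_ fun α => (gauge_pos_of_ne hcomp hnhds (sphP_ne_zero α b)).ne'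
  exact (continuous_gauge hconv hnhds).comp
    (show Continuous fun α : ℝ => sphP α b from contPt Real.continuous_cos
      (Real.continuous_sin.mul continuous_const) (Real.continuous_sin.mul continuous_const))


lemma cont_auxFθ : Continuous (auxFθ K) := by
  unfold auxFθ
  exact intervalIntegral.continuous_parametric_intervalIntegral_of_continuous'
    (f := fun β α => radial K (sphP α β) ^ 3 * sin α)
    (by rw [Function.uncurry_def]; exact (((cont_radial_sphP hcomp hconv hnhds).pow 3).mul
      (Real.continuous_sin.comp continuous_snd))) 0 π

lemma cont_auxFφ (b : ℝ) : Continuous (auxFφ K b) := by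
  unfold auxFφ
  exact (cont_radial_sphP1 hcomp hconv hnhds b).pow 2

end Radial

/-! ### Uniqueness of the bisecting point -/

lemma bisect_unique {f : ℝ → ℝ} {c : ℝ} (hf : Continuous f) (hc : 0 < c)
    (hpos : ∀ x, c ≤ f x) {a b : ℝ}
    (Ha : ∫ x in (0:ℝ)..a, f x = ∫ x in a..π, f x)
    (Hb : ∫ x in (0:ℝ)..b, f x = ∫ x in b..π, f x) : a = b := by
  have hi : ∀ u v : ℝ, IntervalIntegrable f volume u v := fun u v => hf.intervalIntegrable u v
  have key : ∀ u v : ℝ, u ≤ v →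
      (∫ x in (0:ℝ)..u, f x = ∫ x in u..π, f x) →
      (∫ x in (0:ℝ)..v, f x = ∫ x in v..π, f x) → v ≤ u := by
    intro u v huv Hu Hv
    have h1 : (∫ x in (0:ℝ)..u, f x) + ∫ x in u..π, f x = ∫ x in (0:ℝ)..π, f x :=
      intervalIntegral.integral_add_adjacent_intervals (hi _ _) (hi _ _)
    have h2 : (∫ x in (0:ℝ)..v, f x) + ∫ x in v..π, f x = ∫ x in (0:ℝ)..π, f x :=
      intervalIntegral.integral_add_adjacent_intervals (hi _ _) (hi _ _)
    have h3 : (∫ x in (0:ℝ)..u, f x) + ∫ x in u..v, f x = ∫ x in (0:ℝ)..v, f x :=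
      intervalIntegral.integral_add_adjacent_intervals (hi _ _) (hi _ _)
    have h5 : c * (v - u) ≤ ∫ x in u..v, f x := by
      have := intervalIntegral.integral_mono_on huv (intervalIntegrable_const (c := c))
        (hi u v) (fun x _ => hpos x)
      rwa [intervalIntegral.integral_const, smul_eq_mul, mul_comm] at this
    nlinarith
  rcases le_total a b with h | h
  · linarith [key a b h Ha Hb]
  · linarith [key b a h Hb Ha]

end Aux


/-- Lemmas 5.8 and 5.9: for `K ∈ 𝒦̂`, `Θ(Y(π)K) = π − Θ(K)`, `Φ(Y(π)K) = π − Φ(K)`,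
`Ψ(Y(π)K) = Ψ(K)`, and `F(Y(π)K) = −F(K)`, `G(Y(π)K) = −G(K)`, `H(Y(π)K) = H(K)`. -/
theorem FGH_rotY_pi (K : Set E3) (hK : IsKhat K)
    (Θ Φ Ψ : ℝ) (hΘ : ThetaEq K Θ) (hΦ : PhiEq K Φ) (hΨ : PsiEq K Θ Ψ)
    (Θ' Φ' Ψ' : ℝ)
    (hΘ' : ThetaEq (rotY π '' K) Θ')
    (hΦ' : PhiEq (rotY π '' K) Φ')
    (hΨ' : PsiEq (rotY π '' K) Θ' Ψ') :
    Θ' = π - Θ ∧ Φ' = π - Φ ∧ Ψ' = Ψ ∧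
      Ffun (shear Θ' Φ' Ψ' ⁻¹' (rotY π '' K)) = -Ffun (shear Θ Φ Ψ ⁻¹' K) ∧
      Gfun (shear Θ' Φ' Ψ' ⁻¹' (rotY π '' K)) = -Gfun (shear Θ Φ Ψ ⁻¹' K) ∧
      Hfun (shear Θ' Φ' Ψ' ⁻¹' (rotY π '' K)) = Hfun (shear Θ Φ Ψ ⁻¹' K) := by
  obtain ⟨hcomp, hconv, hint, hsymm, -, -⟩ := hK
  have h0int : (0 : E3) ∈ interior K := by
    obtain ⟨x, hx⟩ := hint
    have hx' : -x ∈ interior K := by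
      rw [hsymm]
      have hin : interior (-K : Set E3) = -(interior K) := by
        rw [show (-K : Set E3) = (Homeomorph.neg E3) ⁻¹' K from rfl,
          ← Homeomorph.preimage_interior]
        rfl
      rw [hin]
      exact Set.neg_mem_neg.2 hx
    have := hconv.interior hx hx' (by norm_num : (0:ℝ) ≤ 1/2)
      (by norm_num : (0:ℝ) ≤ 1/2) (by norm_num)
    simpa [smul_neg] using this
  have hnhds : K ∈ 𝓝 (0 : E3) := mem_interior_iff_mem_nhds.1 h0int
  obtain ⟨r, hr0, hrle⟩ := radial_lb hcomp hconv hnhds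
  have hradK' : ∀ x, radial (rotY π '' K) x = radial K (flipY x) := radial_image_rot hsymm
  have hcont1 : ∀ b : ℝ, Continuous fun α => radial K (sphP α b) := fun b =>
    cont_radial_sphP1 hcomp hconv hnhds b
  -- Θ
  have hcontθ : Continuous (auxFθ K) := cont_auxFθ hcomp hconv hnhds
  have hθpos : ∀ β : ℝ, r ^ 3 * 2 ≤ auxFθ K β := by
    intro β
    have hpt : ∀ α ∈ Icc (0:ℝ) π, r ^ 3 * sin α ≤ radial K (sphP α β) ^ 3 * sin α := by
      intro α hα
      exact mul_le_mul_of_nonneg_right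
        (pow_le_pow_left₀ hr0.le (hrle _ (norm_sphP α β)) 3)
        (Real.sin_nonneg_of_nonneg_of_le_pi hα.1 hα.2)
    have hmono := intervalIntegral.integral_mono_on (a := 0) (b := π) (μ := volume)
      Real.pi_pos.le
      ((continuous_const.mul Real.continuous_sin).intervalIntegrable 0 π)
      (((hcont1 β).pow 3 |>.mul Real.continuous_sin).intervalIntegrable 0 π) hpt
    calc r ^ 3 * 2 = ∫ α in (0:ℝ)..π, r ^ 3 * sin α := by
          rw [intervalIntegral.integral_const_mul, integral_sin]; norm_num
    _ ≤ auxFθ K β := hmono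
  have hθtrans : ∀ u v : ℝ,
      (∫ β in u..v, ∫ α in (0:ℝ)..π, radial (rotY π '' K) (sphP α β) ^ 3 * sin α)
        = ∫ β in (π - v)..(π - u), auxFθ K β := by
    intro u v
    have h1 : (∫ β in u..v, ∫ α in (0:ℝ)..π, radial (rotY π '' K) (sphP α β) ^ 3 * sin α)
        = ∫ β in u..v, auxFθ K (π - β) := by
      apply intervalIntegral.integral_congr
      intro β _
      show (∫ α in (0:ℝ)..π, radial (rotY π '' K) (sphP α β) ^ 3 * sin α)
        = auxFθ K (π - β)
      have h2 : auxFθ K (π - β)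
          = ∫ α in (0:ℝ)..π, radial K (sphP α (π - β)) ^ 3 * sin α := rfl
      rw [h2]
      apply intervalIntegral.integral_congr
      intro α _
      simp only [hradK', flipY_sphP]
    rw [h1, intervalIntegral.integral_comp_sub_left (auxFθ K) π]
  have hΘK : π - Θ' = Θ := by
    apply bisect_unique hcontθ (mul_pos (pow_pos hr0 3) two_pos) hθpos ?_ hΘ.2
    have h2 := hΘ'.2
    rw [hθtrans, hθtrans] at h2
    simp only [sub_zero, sub_self] at h2
    exact h2.symm
  have hΘval : Θ' = π - Θ := by linarith
  -- Φ
  have hradφ : ∀ α : ℝ, radial (rotY π '' K) (sphP α 0) = radial K (sphP (π - α) 0) := by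
    intro α
    rw [hradK', flipY_sphP, sub_zero, sphP_pi_eq, radial_neg_arg hsymm]
  have hφtrans : ∀ u v : ℝ, (∫ α in u..v, radial (rotY π '' K) (sphP α 0) ^ 2)
      = ∫ α in (π - v)..(π - u), auxFφ K 0 α := by
    intro u v
    have h1 : (∫ α in u..v, radial (rotY π '' K) (sphP α 0) ^ 2)
        = ∫ α in u..v, auxFφ K 0 (π - α) :=
      intervalIntegral.integral_congr fun α _ => by
        show _ = radial K (sphP (π - α) 0) ^ 2
        simp only [hradφ]
    rw [h1, intervalIntegral.integral_comp_sub_left (auxFφ K 0) π]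
  have hφpos : ∀ b : ℝ, ∀ x : ℝ, r ^ 2 ≤ auxFφ K b x := fun b x =>
    pow_le_pow_left₀ hr0.le (hrle _ (norm_sphP x b)) 2
  have hΦK : π - Φ' = Φ := by
    apply bisect_unique (cont_auxFφ hcomp hconv hnhds 0) (pow_pos hr0 2) (hφpos 0) ?_ hΦ.2
    have h2 := hΦ'.2
    rw [hφtrans, hφtrans] at h2
    simp only [sub_zero, sub_self] at h2
    exact h2.symm
  have hΦval : Φ' = π - Φ := by linarith
  -- Ψ
  have hradψ : ∀ α : ℝ, radial (rotY π '' K) (sphP α Θ') = radial K (sphP α Θ) := by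
    intro α
    rw [hradK', flipY_sphP, hΘval, sub_sub_cancel]
  have hΨval : Ψ' = Ψ := by
    apply bisect_unique (cont_auxFφ hcomp hconv hnhds Θ) (pow_pos hr0 2) (hφpos Θ) ?_ hΨ.2
    have h2 := hΨ'.2
    have e1 : ∀ u v : ℝ, (∫ α in u..v, radial (rotY π '' K) (sphP α Θ') ^ 2)
        = ∫ α in u..v, auxFφ K Θ α :=
      fun u v => intervalIntegral.integral_congr fun α _ => by
        show _ = radial K (sphP α Θ) ^ 2
        simp only [hradψ]
    rw [e1, e1] at h2
    exact h2
  -- geometry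
  have hmemL' : ∀ p : E3, shear Θ' Φ' Ψ' p ∈ rotY π '' K ↔ shear Θ Φ Ψ (flipY p) ∈ K := by
    intro p
    rw [hΘval, hΦval, hΨval, mem_rotY_image, rot_shear,
      ← neg_mem_symm hsymm (shear Θ Φ Ψ (rotY π p)), ← shear_neg, neg_rotY_pi]
  have hsetid : ∀ (A B : Set E3), (∀ p : E3, p ∈ A ↔ flipY p ∈ B) →
      shear Θ' Φ' Ψ' ⁻¹' (rotY π '' K) ∩ A
        = flipY ⁻¹' (shear Θ Φ Ψ ⁻¹' K ∩ B) := by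
    intro A B hAB
    ext p
    rw [mem_inter_iff, mem_preimage, mem_preimage, mem_inter_iff, mem_preimage,
      hmemL' p, hAB p]
  have hvol : ∀ (A B : Set E3), (∀ p : E3, p ∈ A ↔ flipY p ∈ B) →
      volume (shear Θ' Φ' Ψ' ⁻¹' (rotY π '' K) ∩ A) = volume (shear Θ Φ Ψ ⁻¹' K ∩ B) := by
    intro A B hAB
    rw [hsetid A B hAB, vol_preimage_flipY]
  have hmh : ∀ (A B : Set E3), (∀ p : E3, p ∈ A ↔ flipY p ∈ B) →
      μH[2] (shear Θ' Φ' Ψ' ⁻¹' (rotY π '' K) ∩ A) = μH[2] (shear Θ Φ Ψ ⁻¹' K ∩ B) := by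
    intro A B hAB
    rw [hsetid A B hAB, mh2_preimage_flipY]
  refine ⟨hΘval, hΦval, hΨval, ?_, ?_, ?_⟩
  · unfold Ffun
    rw [hmh {p : E3 | p 0 = 0 ∧ 0 ≤ p 1 ∧ 0 ≤ p 2} {p : E3 | p 0 = 0 ∧ p 1 ≤ 0 ∧ 0 ≤ p 2}
        (fun p => by simp [flipY, neg_nonneg]),
      hmh {p : E3 | p 0 = 0 ∧ p 1 ≤ 0 ∧ 0 ≤ p 2} {p : E3 | p 0 = 0 ∧ 0 ≤ p 1 ∧ 0 ≤ p 2}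
        (fun p => by simp [flipY, neg_nonneg])]
    ring
  · unfold Gfun vol₁ vol₂ vol₃ vol₄
    rw [hvol {p : E3 | 0 ≤ p 0 ∧ 0 ≤ p 1 ∧ 0 ≤ p 2} {p : E3 | 0 ≤ p 0 ∧ p 1 ≤ 0 ∧ 0 ≤ p 2}
        (fun p => by simp [flipY, neg_nonneg]),
      hvol {p : E3 | p 0 ≤ 0 ∧ 0 ≤ p 1 ∧ 0 ≤ p 2} {p : E3 | p 0 ≤ 0 ∧ p 1 ≤ 0 ∧ 0 ≤ p 2}
        (fun p => by simp [flipY, neg_nonneg]),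
      hvol {p : E3 | p 0 ≤ 0 ∧ p 1 ≤ 0 ∧ 0 ≤ p 2} {p : E3 | p 0 ≤ 0 ∧ 0 ≤ p 1 ∧ 0 ≤ p 2}
        (fun p => by simp [flipY, neg_nonneg]),
      hvol {p : E3 | 0 ≤ p 0 ∧ p 1 ≤ 0 ∧ 0 ≤ p 2} {p : E3 | 0 ≤ p 0 ∧ 0 ≤ p 1 ∧ 0 ≤ p 2}
        (fun p => by simp [flipY, neg_nonneg])]
    ring
  · unfold Hfun vol₁ vol₂ vol₃ vol₄
    rw [hvol {p : E3 | 0 ≤ p 0 ∧ 0 ≤ p 1 ∧ 0 ≤ p 2} {p : E3 | 0 ≤ p 0 ∧ p 1 ≤ 0 ∧ 0 ≤ p 2}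
        (fun p => by simp [flipY, neg_nonneg]),
      hvol {p : E3 | p 0 ≤ 0 ∧ 0 ≤ p 1 ∧ 0 ≤ p 2} {p : E3 | p 0 ≤ 0 ∧ p 1 ≤ 0 ∧ 0 ≤ p 2}
        (fun p => by simp [flipY, neg_nonneg]),
      hvol {p : E3 | p 0 ≤ 0 ∧ p 1 ≤ 0 ∧ 0 ≤ p 2} {p : E3 | p 0 ≤ 0 ∧ 0 ≤ p 1 ∧ 0 ≤ p 2}
        (fun p => by simp [flipY, neg_nonneg]),
      hvol {p : E3 | 0 ≤ p 0 ∧ p 1 ≤ 0 ∧ 0 ≤ p 2} {p : E3 | 0 ≤ p 0 ∧ 0 ≤ p 1 ∧ 0 ≤ p 2}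
        (fun p => by simp [flipY, neg_nonneg])]
    ring
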